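/- Under the D-module isomorphism Φ : M → (M/MD_+) ⊗_k D sending m to Σ_{n≥0} (∇^n m)_0 ⊗ x^{[n]}, the q-connection ∇ on M corresponds to the map 1 ⊗ d, where d(x^{[n]}) = x^{[n-1]}. -/

import Mathlib

open TensorProduct

noncomputable def qPoly (n : ℕ) : Polynomial ℤ :=
  ∑ i ∈ Finset.range n, Polynomial.X ^ i

noncomputable def qFact (n : ℕ) : Polynomial ℤ :=
  ∏ i ∈ Finset.range n, qPoly (i + 1)

noncomputable def gaussPoly (n m : ℕ) : Polynomial ℤ :=
  Polynomial.divByMonic (qFact n) (qFact m * qFact (n - m))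

noncomputable def qBinom (k : Type*) [CommRing k] (q : k) (n m : ℕ) : k :=
  Polynomial.eval₂ (Int.castRingHom k) q (gaussPoly n m)

/-- Right multiplication on the `q`-divided power algebra `D = ⊕ k·x^{[n]}` (realized as
`ℕ →₀ k`): `x^{[a]}·x^{[b]} = [a+b choose a]_q x^{[a+b]}`. -/
noncomputable def mulRightL {k : Type*} [CommRing k] (q : k) (g : ℕ →₀ k) :
    (ℕ →₀ k) →ₗ[k] (ℕ →₀ k) :=
  Finsupp.lsum k fun a =>
    g.sum fun b cb =>
      (qBinom k q (a + b) a * cb) • (Finsupp.lsingle (a + b) : k →ₗ[k] (ℕ →₀ k))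

/-- The multiplication of the `q`-divided power algebra `D`. -/
noncomputable def Dmul {k : Type*} [CommRing k] (q : k) (f g : ℕ →₀ k) : ℕ →₀ k :=
  mulRightL q g f

/-- The degree `-1` map `d : D → D`, `x^{[n]} ↦ x^{[n-1]}` (and `x^{[0]} ↦ 0`). -/
noncomputable def DdL {k : Type*} [CommRing k] : (ℕ →₀ k) →ₗ[k] (ℕ →₀ k) :=
  Finsupp.lsum k fun a =>
    if a = 0 then 0 else (Finsupp.lsingle (a - 1) : k →ₗ[k] (ℕ →₀ k))


/-- Under the `D`-module isomorphism `Φ : M → (M/MD_+) ⊗_k D`,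
`Φ(x) = ∑_{n≥0} (conn^n x)_0 ⊗ x^{[n]}`, the `q`-connection `conn` on `M` corresponds to
`1 ⊗ d`, where `d(x^{[n]}) = x^{[n-1]}`. -/
theorem qConnection_corresponds_to_one_tensor_d {k : Type*} [Field k] (q : k)
    {M : Type*} [AddCommGroup M] [Module k M]
    (act : M →ₗ[k] (ℕ →₀ k) →ₗ[k] M)
    (hactmul : ∀ (x : M) (f g : ℕ →₀ k), act (act x f) g = act x (Dmul q f g))
    (hact1 : ∀ x : M, act x (Finsupp.single 0 1) = x)
    (ℳ : ℕ → Submodule k M)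
    (hdecomp : DirectSum.IsInternal ℳ)
    (hgr : ∀ (n m : ℕ) (c : k), ∀ x ∈ ℳ n, act x (Finsupp.single m c) ∈ ℳ (n + m))
    (conn : Module.End k M)
    (hconn0 : ∀ x ∈ ℳ 0, conn x = 0)
    (hconndeg : ∀ n : ℕ, ∀ x ∈ ℳ (n + 1), conn x ∈ ℳ n)
    (hconn : ∀ (m : ℕ) (c : k) (x : M),
      conn (act x (Finsupp.single m c)) =
        act x (DdL (Finsupp.single m c)) + q ^ m • act (conn x) (Finsupp.single m c)) :
    let MD : Submodule k M :=
      Submodule.span k {y : M | ∃ (x : M) (f : ℕ →₀ k), f 0 = 0 ∧ y = act x f};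
    let Φ : M → (M ⧸ MD) ⊗[k] (ℕ →₀ k) := fun x =>
      ∑ᶠ n : ℕ, (MD.mkQ ((conn ^ n) x)) ⊗ₜ[k] Finsupp.single n (1 : k);
    ∀ x : M, Φ (conn x) = TensorProduct.map LinearMap.id DdL (Φ x) := by
  intro MD Φ x
  have hB : ∀ j : ℕ, ∀ y ∈ ℳ j, (conn ^ (j + 1)) y = 0 := by
    intro j
    induction j with
    | zero => intro y hy; simpa using hconn0 y hy
    | succ j ih =>
      intro y hy
      have h1 : conn y ∈ ℳ j := hconndeg j y hy
      have h2 := ih (conn y) h1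
      rw [pow_succ, Module.End.mul_apply, h2]
  have hS : ∀ y : M, ∃ N, ∀ n ≥ N, (conn ^ n) y = 0 := by
    intro y
    have hmem : y ∈ (⊤ : Submodule k M) := trivial
    rw [← hdecomp.submodule_iSup_eq_top] at hmem
    refine Submodule.iSup_induction ℳ (motive := fun z => ∃ N, ∀ n ≥ N, (conn ^ n) z = 0)
      hmem ?_ ?_ ?_
    · intro j z hz
      refine ⟨j + 1, fun n hn => ?_⟩
      obtain ⟨m, rfl⟩ := Nat.exists_eq_add_of_le hn
      rw [add_comm, pow_add, Module.End.mul_apply, hB j z hz, map_zero]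
    · exact ⟨0, fun n _ => map_zero _⟩
    · rintro a b ⟨Na, ha⟩ ⟨Nb, hb⟩
      exact ⟨max Na Nb, fun n hn => by
        rw [map_add, ha n (le_trans (le_max_left _ _) hn),
          hb n (le_trans (le_max_right _ _) hn), add_zero]⟩
  obtain ⟨N, hN⟩ := hS x
  have hN' : ∀ n ≥ N, (conn ^ n) (conn x) = 0 := by
    intro n hn
    have h := hN (n + 1) (by omega)
    rw [pow_succ, Module.End.mul_apply] at h
    exact h
  have hΦx : Φ x = ∑ n ∈ Finset.range (N + 1),
      (MD.mkQ ((conn ^ n) x)) ⊗ₜ[k] Finsupp.single n (1 : k) := by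
    refine finsum_eq_sum_of_support_subset _ ?_
    intro n hn
    simp only [Finset.coe_range, Set.mem_Iio]
    by_contra h
    push_neg at h
    exact hn (by simp [hN n (by omega)])
  have hΦcx : Φ (conn x) = ∑ n ∈ Finset.range N,
      (MD.mkQ ((conn ^ n) (conn x))) ⊗ₜ[k] Finsupp.single n (1 : k) := by
    refine finsum_eq_sum_of_support_subset _ ?_
    intro n hn
    simp only [Finset.coe_range, Set.mem_Iio]
    by_contra h
    push_neg at h
    exact hn (by simp [hN' n (by omega)])
  have hd0 : (DdL : (ℕ →₀ k) →ₗ[k] (ℕ →₀ k)) (Finsupp.single 0 (1 : k)) = 0 := by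
    simp [DdL]
  have hds : ∀ m : ℕ, (DdL : (ℕ →₀ k) →ₗ[k] (ℕ →₀ k)) (Finsupp.single (m + 1) (1 : k))
      = Finsupp.single m (1 : k) := by
    intro m
    simp [DdL]
  rw [hΦcx, hΦx, map_sum, Finset.sum_range_succ']
  simp only [TensorProduct.map_tmul, LinearMap.id_coe, id_eq, hd0, hds,
    TensorProduct.tmul_zero, add_zero]
  refine Finset.sum_congr rfl fun m _ => ?_
  rw [pow_succ, Module.End.mul_apply]
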